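/- Let (x_n) be the modified Tripell sequence defined by x_0 = 0, x_1 = 1, x_2 = 2 and x_n = 2x_{n-1} + 2x_{n-2} + x_{n-3}. The only solutions of x_n = m! in positive integers n, m are (n, m) ∈ {(1,1), (2,2), (3,3)}. -/

import Mathlib

def modTripell : ℕ → ℤ
  | 0 => 0
  | 1 => 1
  | 2 => 2
  | n + 3 => 2 * modTripell (n + 2) + 2 * modTripell (n + 1) + modTripell n

local notation "x" => modTripell

lemma xrec (n : ℕ) : modTripell (n+3) = 2 * modTripell (n+2) + 2 * modTripell (n+1) + modTripell n := rfl
lemma x0 : modTripell 0 = 0 := rfl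
lemma x1 : modTripell 1 = 1 := rfl
lemma x2 : modTripell 2 = 2 := rfl
lemma x3 : modTripell 3 = 6 := by have e := xrec 0; norm_num at e; rw [e, x2, x1, x0]; norm_num
lemma x4 : modTripell 4 = 17 := by have e := xrec 1; norm_num at e; rw [e, x3, x2, x1]; norm_num
lemma x5 : modTripell 5 = 48 := by have e := xrec 2; norm_num at e; rw [e, x4, x3, x2]; norm_num
lemma x6 : modTripell 6 = 136 := by have e := xrec 3; norm_num at e; rw [e, x5, x4, x3]; norm_num
lemma x7 : modTripell 7 = 385 := by have e := xrec 4; norm_num at e; rw [e, x6, x5, x4]; norm_num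
lemma x8 : modTripell 8 = 1090 := by have e := xrec 5; norm_num at e; rw [e, x7, x6, x5]; norm_num
lemma x9 : modTripell 9 = 3086 := by have e := xrec 6; norm_num at e; rw [e, x8, x7, x6]; norm_num
lemma x10 : modTripell 10 = 8737 := by have e := xrec 7; norm_num at e; rw [e, x9, x8, x7]; norm_num
lemma x11 : modTripell 11 = 24736 := by have e := xrec 8; norm_num at e; rw [e, x10, x9, x8]; norm_num
lemma x12 : modTripell 12 = 70032 := by have e := xrec 9; norm_num at e; rw [e, x11, x10, x9]; norm_num
lemma x13 : modTripell 13 = 198273 := by have e := xrec 10; norm_num at e; rw [e, x12, x11, x10]; norm_num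
lemma x14 : modTripell 14 = 561346 := by have e := xrec 11; norm_num at e; rw [e, x13, x12, x11]; norm_num

lemma tripell_ind (P : ℕ → Prop) (h0 : P 0) (h1 : P 1) (h2 : P 2)
    (step : ∀ n, P n → P (n+1) → P (n+2) → P (n+3)) : ∀ n, P n := by
  have key : ∀ n, P n ∧ P (n+1) ∧ P (n+2) := by
    intro n
    induction n with
    | zero => exact ⟨h0, h1, h2⟩
    | succ k ih => exact ⟨ih.2.1, ih.2.2, step k ih.1 ih.2.1 ih.2.2⟩
  exact fun n => (key n).1

lemma x_nonneg : ∀ n, 0 ≤ modTripell n := by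
  refine tripell_ind _ (by norm_num [x0]) (by norm_num [x1]) (by norm_num [x2]) ?_
  intro n h0 h1 h2
  rw [xrec]; positivity

-- period 6 mod 8
lemma mod8_per : ∀ n, ∃ c, modTripell (n+6) - modTripell n = 8 * c := by
  refine tripell_ind _ ⟨17, by rw [x6, x0]; norm_num⟩ ⟨48, by rw [x7, x1]; norm_num⟩
    ⟨136, by rw [x8, x2]; norm_num⟩ ?_
  rintro n ⟨c0, h0⟩ ⟨c1, h1⟩ ⟨c2, h2⟩
  refine ⟨2*c2 + 2*c1 + c0, ?_⟩
  have e1 : n + 3 + 6 = (n + 6) + 3 := by omega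
  rw [e1, xrec (n+6), xrec n]
  have e2 : n + 6 + 2 = (n + 2) + 6 := by omega
  have e3 : n + 6 + 1 = (n + 1) + 6 := by omega
  rw [e2, e3]
  linarith [h0, h1, h2]

-- period 12 mod 16
lemma mod16_per : ∀ n, ∃ c, modTripell (n+12) - modTripell n = 16 * c := by
  refine tripell_ind _ ⟨4377, by rw [x12, x0]; norm_num⟩ ⟨12392, by rw [x13, x1]; norm_num⟩
    ⟨35084, by rw [x14, x2]; norm_num⟩ ?_
  rintro n ⟨c0, h0⟩ ⟨c1, h1⟩ ⟨c2, h2⟩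
  refine ⟨2*c2 + 2*c1 + c0, ?_⟩
  have e1 : n + 3 + 12 = (n + 12) + 3 := by omega
  rw [e1, xrec (n+12), xrec n]
  have e2 : n + 12 + 2 = (n + 2) + 12 := by omega
  have e3 : n + 12 + 1 = (n + 1) + 12 := by omega
  rw [e2, e3]
  linarith [h0, h1, h2]

-- values mod 8 in residue classes mod 6
lemma div8_6k : ∀ k, ∃ c, modTripell (6*k) = 8 * c := by
  intro k; induction k with
  | zero => exact ⟨0, by norm_num [x0]⟩
  | succ j ih =>
    obtain ⟨c, hc⟩ := ih
    obtain ⟨d, hd⟩ := mod8_per (6*j)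
    exact ⟨c + d, by rw [show 6*(j+1) = 6*j+6 by ring]; linarith⟩

lemma div8_6k5 : ∀ k, ∃ c, modTripell (6*k+5) = 8 * c := by
  intro k; induction k with
  | zero => exact ⟨6, by norm_num [x5]⟩
  | succ j ih =>
    obtain ⟨c, hc⟩ := ih
    obtain ⟨d, hd⟩ := mod8_per (6*j+5)
    exact ⟨c + d, by rw [show 6*(j+1)+5 = (6*j+5)+6 by ring]; linarith⟩

lemma mod8_6k1 : ∀ k, ∃ c, modTripell (6*k+1) = 8 * c + 1 := by
  intro k; induction k with
  | zero => exact ⟨0, by norm_num [x1]⟩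
  | succ j ih =>
    obtain ⟨c, hc⟩ := ih
    obtain ⟨d, hd⟩ := mod8_per (6*j+1)
    exact ⟨c + d, by rw [show 6*(j+1)+1 = (6*j+1)+6 by ring]; linarith⟩

lemma mod8_6k4 : ∀ k, ∃ c, modTripell (6*k+4) = 8 * c + 1 := by
  intro k; induction k with
  | zero => exact ⟨2, by norm_num [x4]⟩
  | succ j ih =>
    obtain ⟨c, hc⟩ := ih
    obtain ⟨d, hd⟩ := mod8_per (6*j+4)
    exact ⟨c + d, by rw [show 6*(j+1)+4 = (6*j+4)+6 by ring]; linarith⟩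

-- oddness at indices ≡ 1 mod 3
lemma odd_3k1 : ∀ k, ∃ c, modTripell (3*k+1) = 2 * c + 1 := by
  intro k; induction k with
  | zero => exact ⟨0, by norm_num [x1]⟩
  | succ j ih =>
    obtain ⟨c, hc⟩ := ih
    refine ⟨modTripell (3*j+3) + modTripell (3*j+2) + c, ?_⟩
    rw [show 3*(j+1)+1 = (3*j+1)+3 by ring, xrec (3*j+1)]
    rw [show 3*j+1+2 = 3*j+3 by ring, show 3*j+1+1 = 3*j+2 by ring]
    linarith

-- addition identity
lemma addid : ∀ b a : ℕ, modTripell (a+b+3) =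
    modTripell (a+2) * modTripell (b+2) + (2 * modTripell (a+1) + modTripell a) * modTripell (b+1)
      + modTripell (a+1) * modTripell b := by
  refine tripell_ind _ ?_ ?_ ?_ ?_
  · intro a
    rw [show a+0+3 = a+3 by omega, xrec a, x2, x1, x0]; ring
  · intro a
    rw [show a+1+3 = (a+1)+3 by omega, xrec (a+1), show a+1+2 = a+3 by omega, xrec a, x3, x2, x1]
    ring
  · intro a
    rw [show a+2+3 = (a+2)+3 by omega, xrec (a+2), show a+2+2 = (a+1)+3 by omega, xrec (a+1),
      show a+1+2 = a+3 by omega, xrec a, x4, x3, x2]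
    ring
  · intro b h0 h1 h2 a
    have g2 := h2 a; have g1 := h1 a; have g0 := h0 a
    rw [show a+(b+2)+3 = a+b+5 by omega, show b+2+2 = b+4 by omega,
      show b+2+1 = b+3 by omega] at g2
    rw [show a+(b+1)+3 = a+b+4 by omega, show b+1+2 = b+3 by omega,
      show b+1+1 = b+2 by omega] at g1
    rw [show a+b+3 = a+b+3 from rfl] at g0
    have eL := xrec (a+b+3)
    rw [show a+b+3+3 = a+b+6 by omega, show a+b+3+2 = a+b+5 by omega,
      show a+b+3+1 = a+b+4 by omega] at eL
    have e4 := xrec (b+2)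
    rw [show b+2+3 = b+5 by omega, show b+2+2 = b+4 by omega, show b+2+1 = b+3 by omega] at e4
    have e3 := xrec (b+1)
    rw [show b+1+3 = b+4 by omega, show b+1+2 = b+3 by omega, show b+1+1 = b+2 by omega] at e3
    rw [show a+(b+3)+3 = a+b+6 by omega, show b+3+2 = b+5 by omega, show b+3+1 = b+4 by omega]
    have e2 := xrec b
    linear_combination eL + 2*g2 + 2*g1 + g0 - modTripell (a+2)*e4
      - (2*modTripell (a+1) + modTripell a)*e3 - modTripell (a+1)*e2

lemma specialVal : ∀ t : ℕ, ∃ a b : ℤ,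
    modTripell (6*2^t) = 2^(t+3) * (2*a+1) ∧ modTripell (6*2^t - 1) = 2^(t+4) * (2*b+1) := by
  intro t
  induction t with
  | zero => exact ⟨8, 1, by rw [show 6*2^0 = 6 by norm_num, x6]; norm_num,
      by rw [show 6*2^0 - 1 = 5 by norm_num, x5]; norm_num⟩
  | succ t ih =>
    obtain ⟨a, b, hA, hB⟩ := ih
    have h1 : 1 ≤ 2^t := Nat.one_le_two_pow
    have hp : (2:ℕ)^(t+1) = 2*2^t := by rw [pow_succ]; ring
    obtain ⟨c, hc⟩ := mod8_6k4 (2^t - 1)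
    obtain ⟨d, hd⟩ := mod8_6k1 (2^t)
    set u : ℕ := 6*2^t - 2 with hu
    rw [show 6*(2^t-1)+4 = u by omega] at hc
    rw [show 6*2^t+1 = u+3 by omega] at hd
    rw [show 6*2^t = u+2 by omega] at hA
    rw [show 6*2^t-1 = u+1 by omega] at hB
    have id1 := addid (u+1) u
    have id2 := addid u u
    rw [show u+(u+1)+3 = 6*2^(t+1) by omega, show u+1+2 = u+3 by omega,
      show u+1+1 = u+2 by omega] at id1
    rw [show u+u+3 = 6*2^(t+1)-1 by omega] at id2
    refine ⟨2*a*(2*d + 2*c + 2^(t+3)*(2*b+1)) + a + (2*d + 2*c + 2^(t+3)*(2*b+1))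
        + 2^(t+3)*(2*b+1)^2,
      8*b*c + 4*c + b + 2^t*(2*a+1)^2 + 2^(t+3)*(2*b+1)^2, ?_, ?_⟩
    · rw [id1, hA, hB, hc, hd]; ring
    · rw [id2, hA, hB, hc]; ring

lemma caseA (t : ℕ) : ∀ i : ℕ, ∃ y : ℤ,
    modTripell (12*2^t*i) = 2^(t+4) * y ∧ y % 2 = (i : ℤ) % 2 := by
  have h1 : 1 ≤ (2:ℕ)^t := Nat.one_le_two_pow
  obtain ⟨a, b, hA, hB⟩ := specialVal (t+1)
  have hp : (2:ℕ)^(t+1) = 2*2^t := by rw [pow_succ]; ring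
  rw [show 6*2^(t+1) = 12*2^t by omega] at hA
  rw [show 6*2^(t+1)-1 = 12*2^t-1 by omega] at hB
  have hA' : modTripell (12*2^t) = 2^(t+4) * (2*a+1) := by
    rw [hA]
  intro i
  induction i with
  | zero => exact ⟨0, by rw [Nat.mul_zero, x0]; ring, by norm_num⟩
  | succ i ih =>
    obtain ⟨y, hy, hy2⟩ := ih
    rcases Nat.eq_zero_or_pos i with rfl | hi
    · exact ⟨2*a+1, by rw [Nat.mul_one]; exact hA', by omega⟩
    · obtain ⟨c, hc⟩ := mod8_6k4 (2^(t+1) - 1)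
      rw [show 6*(2^(t+1)-1)+4 = 12*2^t-2 by omega] at hc
      obtain ⟨w, hw⟩ := odd_3k1 (4*2^t*i)
      rw [show 3*(4*2^t*i)+1 = 12*2^t*i+1 by ring] at hw
      have e1 : 12*2^t*(i+1) = 12*2^t*i + 12*2^t := by ring
      have e2 : 12*2^t ≤ 12*2^t*i := Nat.le_mul_of_pos_right (12*2^t) hi
      have id1 := addid (12*2^t*i-1) (12*2^t-2)
      rw [show 12*2^t-2+(12*2^t*i-1)+3 = 12*2^t*(i+1) by omega,
        show 12*2^t-2+2 = 12*2^t by omega, show 12*2^t-2+1 = 12*2^t-1 by omega,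
        show 12*2^t*i-1+2 = 12*2^t*i+1 by omega,
        show 12*2^t*i-1+1 = 12*2^t*i by omega] at id1
      refine ⟨(2*a+1)*(2*w+1) + (2^(t+6)*(2*b+1)+8*c+1)*y
          + 2*(2*b+1)*modTripell (12*2^t*i-1), ?_, ?_⟩
      · rw [id1, hA', hB, hc, hw, hy]; ring
      · have : (2*a+1)*(2*w+1) + (2^(t+6)*(2*b+1)+8*c+1)*y
            + 2*(2*b+1)*modTripell (12*2^t*i-1)
            = y + 1 + 2*(2*a*w+a+w + (2^(t+5)*(2*b+1)+4*c)*y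
              + (2*b+1)*modTripell (12*2^t*i-1)) := by ring
        rw [this]; push_cast; omega

lemma caseB (t : ℕ) : ∀ i : ℕ, ∃ z : ℤ,
    modTripell (6*2^t*(i+1) - 1) = 2^(t+4) * z ∧ z % 2 = ((i : ℤ)+1) % 2 := by
  have h1 : 1 ≤ (2:ℕ)^t := Nat.one_le_two_pow
  obtain ⟨a, b, hA, hB⟩ := specialVal t
  intro i
  induction i with
  | zero => exact ⟨2*b+1, by rw [Nat.mul_one]; exact hB, by omega⟩
  | succ i ih =>
    obtain ⟨z, hz, hz2⟩ := ih
    obtain ⟨c, hc⟩ := mod8_6k4 (2^t - 1)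
    rw [show 6*(2^t-1)+4 = 6*2^t-2 by omega] at hc
    obtain ⟨w, hw⟩ := div8_6k (2^t*(i+1))
    rw [show 6*(2^t*(i+1)) = 6*2^t*(i+1) by ring] at hw
    obtain ⟨v, hv⟩ := odd_3k1 (2*2^t*(i+1) - 1)
    have e1 : 6*2^t*(i+1) = 3*(2*2^t*(i+1)) := by ring
    have e2 : 0 < 2*2^t*(i+1) := by positivity
    have e3 : 6*2^t*(i+1+1) = 6*2^t*(i+1) + 6*2^t := by ring
    rw [show 3*(2*2^t*(i+1)-1)+1 = 6*2^t*(i+1)-2 by omega] at hv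
    have hle : 6*2^t ≤ 6*2^t*(i+1) := Nat.le_mul_of_pos_right (6*2^t) (Nat.succ_pos i)
    have id1 := addid (6*2^t*(i+1)-2) (6*2^t-2)
    rw [show 6*2^t-2+(6*2^t*(i+1)-2)+3 = 6*2^t*(i+1+1)-1 by omega,
      show 6*2^t-2+2 = 6*2^t by omega, show 6*2^t-2+1 = 6*2^t-1 by omega,
      show 6*2^t*(i+1)-2+2 = 6*2^t*(i+1) by omega,
      show 6*2^t*(i+1)-2+1 = 6*2^t*(i+1)-1 by omega] at id1
    refine ⟨4*(2*a+1)*w + (2^(t+5)*(2*b+1)+8*c+1)*z + (2*b+1)*(2*v+1), ?_, ?_⟩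
    · rw [id1, hA, hB, hc, hw, hv, hz]; ring
    · have : 4*(2*a+1)*w + (2^(t+5)*(2*b+1)+8*c+1)*z + (2*b+1)*(2*v+1)
          = z + 1 + 2*(2*(2*a+1)*w + (2^(t+4)*(2*b+1)+4*c)*z + (2*b*v+b+v)) := by ring
      rw [this]; push_cast; omega

lemma red16 : ∀ q r, ∃ c, modTripell (12*q + r) = modTripell r + 16*c := by
  intro q; induction q with
  | zero => intro r; exact ⟨0, by norm_num⟩
  | succ j ih =>
    intro r
    obtain ⟨c, hc⟩ := ih r
    obtain ⟨d, hd⟩ := mod16_per (12*j + r)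
    exact ⟨c + d, by rw [show 12*(j+1)+r = (12*j+r)+12 by ring]; linarith⟩

lemma T0 : ∀ n : ℕ, 1 ≤ n → (16:ℤ) ∣ modTripell n → 12 ∣ n ∨ 6 ∣ (n+1) := by
  intro n hn hdvd
  obtain ⟨c, hc⟩ := red16 (n/12) (n%12)
  rw [show 12*(n/12) + n%12 = n by omega] at hc
  have h16 : (16:ℤ) ∣ modTripell (n % 12) := by
    obtain ⟨k, hk⟩ := hdvd
    exact ⟨k - c, by rw [hc] at hk; linarith⟩
  have hr12 : n % 12 = 0 ∨ n % 12 = 1 ∨ n % 12 = 2 ∨ n % 12 = 3 ∨ n % 12 = 4 ∨ n % 12 = 5 ∨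
      n % 12 = 6 ∨ n % 12 = 7 ∨ n % 12 = 8 ∨ n % 12 = 9 ∨ n % 12 = 10 ∨ n % 12 = 11 := by omega
  rcases hr12 with h|h|h|h|h|h|h|h|h|h|h|h
  · exact Or.inl (by omega)
  · rw [h, x1] at h16; omega
  · rw [h, x2] at h16; omega
  · rw [h, x3] at h16; omega
  · rw [h, x4] at h16; omega
  · exact Or.inr (by omega)
  · rw [h, x6] at h16; omega
  · rw [h, x7] at h16; omega
  · rw [h, x8] at h16; omega
  · rw [h, x9] at h16; omega
  · rw [h, x10] at h16; omega
  · exact Or.inr (by omega)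

lemma Tmain : ∀ t : ℕ, ∀ n : ℕ, 1 ≤ n → ((2:ℤ)^(t+4)) ∣ modTripell n →
    12*2^t ∣ n ∨ 6*2^t ∣ (n+1) := by
  intro t
  induction t with
  | zero =>
    intro n hn hdvd
    have := T0 n hn (by norm_num at hdvd ⊢; exact hdvd)
    omega
  | succ t ih =>
    intro n hn hdvd
    have hp : (2:ℕ)^(t+1) = 2*2^t := by rw [pow_succ]; ring
    have hdvd' : ((2:ℤ)^(t+4)) ∣ modTripell n :=
      dvd_trans (pow_dvd_pow 2 (by omega)) hdvd
    rcases ih n hn hdvd' with ⟨q, hq⟩ | ⟨q, hq⟩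
    · obtain ⟨y, hy, hy2⟩ := caseA t q
      rw [← hq] at hy
      rw [hy] at hdvd
      have h2y : (2:ℤ) ∣ y := by
        obtain ⟨k, hk⟩ := hdvd
        refine ⟨k, ?_⟩
        have hne : ((2:ℤ)^(t+4)) ≠ 0 := by positivity
        apply mul_left_cancel₀ hne
        rw [hk, show ((2:ℤ)^(t+1+4)) = 2^(t+4)*2 by ring]; ring
      have hq2 : 2 ∣ q := by omega
      obtain ⟨q', rfl⟩ := hq2
      exact Or.inl ⟨q', by rw [hq, hp]; ring⟩
    · have hq1 : 1 ≤ q := by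
        rcases Nat.eq_zero_or_pos q with rfl | h; · omega
        · exact h
      obtain ⟨i, rfl⟩ : ∃ i, q = i + 1 := ⟨q - 1, by omega⟩
      obtain ⟨z, hz, hz2⟩ := caseB t i
      rw [show 6*2^t*(i+1) - 1 = n by omega] at hz
      rw [hz] at hdvd
      have h2z : (2:ℤ) ∣ z := by
        obtain ⟨k, hk⟩ := hdvd
        refine ⟨k, ?_⟩
        have hne : ((2:ℤ)^(t+4)) ≠ 0 := by positivity
        apply mul_left_cancel₀ hne
        rw [hk, show ((2:ℤ)^(t+1+4)) = 2^(t+4)*2 by ring]; ring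
      have hi2 : 2 ∣ (i+1) := by omega
      obtain ⟨q', hq'⟩ := hi2
      exact Or.inr ⟨q', by rw [hq, hq', hp]; ring⟩

lemma x_step : ∀ k, 2 * modTripell (k+2) ≤ modTripell (k+3) := by
  intro k; rw [xrec]
  have h1 := x_nonneg (k+1); have h0 := x_nonneg k
  linarith

lemma x_ge : ∀ n, (2:ℤ)^n ≤ modTripell (n+1) := by
  intro n
  induction n with
  | zero => rw [pow_zero, x1]
  | succ k ih =>
    cases k with
    | zero => rw [x2]; norm_num
    | succ j =>
      have hs := x_step j
      calc (2:ℤ)^(j+1+1) = 2 * 2^(j+1) := by ring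
        _ ≤ 2 * modTripell (j+2) := by linarith
        _ ≤ modTripell (j+3) := hs

lemma two_pow_dvd_fact : ∀ k, 2^k ∣ Nat.factorial (2*k) := by
  intro k; induction k with
  | zero => simp
  | succ j ih =>
    obtain ⟨c, hc⟩ := ih
    refine ⟨(j+1)*(2*j+1)*c, ?_⟩
    rw [show 2*(j+1) = (2*j+1)+1 by ring, Nat.factorial_succ, Nat.factorial_succ, hc]
    ring

lemma aux_lin : ∀ t, 5 ≤ t → 4*t + 15 ≤ 6 * 2^t := by
  intro t ht
  have h := Nat.lt_two_pow_self (n := t)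
  have : 6*(t+1) ≤ 6*2^t := Nat.mul_le_mul_left 6 h
  omega

lemma ineq1 : ∀ t, 5 ≤ t → (2*t+9)*(t+2) + 2 < 6 * 2^t := by
  intro t ht
  induction t with
  | zero => omega
  | succ k ih =>
    rcases Nat.lt_or_ge k 5 with h | h
    · interval_cases k <;> norm_num at *
    · have h1 := ih (by omega)
      have h2 := aux_lin k (by omega)
      have hp : (2:ℕ)^(k+1) = 2*2^k := by rw [pow_succ]; ring
      nlinarith

lemma ineq2 : ∀ t, 5 ≤ t → 2*t+9 ≤ 2^(t+2) := by
  intro t ht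
  have h := Nat.lt_two_pow_self (n := t)
  have hp : (2:ℕ)^(t+2) = 4*2^t := by rw [pow_succ, pow_succ]; ring
  have : 4*(t+1) ≤ 4*2^t := Nat.mul_le_mul_left 4 h
  omega

lemma no_fact_between (v k : ℕ) (h1 : Nat.factorial k < v) (h2 : v < Nat.factorial (k+1)) :
    ∀ m, Nat.factorial m ≠ v := by
  intro m heq
  rcases le_or_gt m k with h | h
  · have := Nat.factorial_le h; omega
  · have := Nat.factorial_le (show k+1 ≤ m from h); omega
lemma x15 : modTripell 15 = 1589270 := by have e := xrec 12; norm_num at e; rw [e, x14, x13, x12]; norm_num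
lemma x16 : modTripell 16 = 4499505 := by have e := xrec 13; norm_num at e; rw [e, x15, x14, x13]; norm_num
lemma x17 : modTripell 17 = 12738896 := by have e := xrec 14; norm_num at e; rw [e, x16, x15, x14]; norm_num
lemma x18 : modTripell 18 = 36066072 := by have e := xrec 15; norm_num at e; rw [e, x17, x16, x15]; norm_num
lemma x19 : modTripell 19 = 102109441 := by have e := xrec 16; norm_num at e; rw [e, x18, x17, x16]; norm_num
lemma x20 : modTripell 20 = 289089922 := by have e := xrec 17; norm_num at e; rw [e, x19, x18, x17]; norm_num
lemma x21 : modTripell 21 = 818464798 := by have e := xrec 18; norm_num at e; rw [e, x20, x19, x18]; norm_num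
lemma x22 : modTripell 22 = 2317218881 := by have e := xrec 19; norm_num at e; rw [e, x21, x20, x19]; norm_num
lemma x23 : modTripell 23 = 6560457280 := by have e := xrec 20; norm_num at e; rw [e, x22, x21, x20]; norm_num
lemma x24 : modTripell 24 = 18573817120 := by have e := xrec 21; norm_num at e; rw [e, x23, x22, x21]; norm_num
lemma x25 : modTripell 25 = 52585767681 := by have e := xrec 22; norm_num at e; rw [e, x24, x23, x22]; norm_num
lemma x26 : modTripell 26 = 148879626882 := by have e := xrec 23; norm_num at e; rw [e, x25, x24, x23]; norm_num
lemma x27 : modTripell 27 = 421504606246 := by have e := xrec 24; norm_num at e; rw [e, x26, x25, x24]; norm_num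
lemma x28 : modTripell 28 = 1193354233937 := by have e := xrec 25; norm_num at e; rw [e, x27, x26, x25]; norm_num
lemma x29 : modTripell 29 = 3378597307248 := by have e := xrec 26; norm_num at e; rw [e, x28, x27, x26]; norm_num
lemma x30 : modTripell 30 = 9565407688616 := by have e := xrec 27; norm_num at e; rw [e, x29, x28, x27]; norm_num
lemma x31 : modTripell 31 = 27081364225665 := by have e := xrec 28; norm_num at e; rw [e, x30, x29, x28]; norm_num
lemma x32 : modTripell 32 = 76672141135810 := by have e := xrec 29; norm_num at e; rw [e, x31, x30, x29]; norm_num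
lemma x33 : modTripell 33 = 217072418411566 := by have e := xrec 30; norm_num at e; rw [e, x32, x31, x30]; norm_num
lemma x34 : modTripell 34 = 614570483320417 := by have e := xrec 31; norm_num at e; rw [e, x33, x32, x31]; norm_num
lemma x35 : modTripell 35 = 1739957944599776 := by have e := xrec 32; norm_num at e; rw [e, x34, x33, x32]; norm_num
lemma x36 : modTripell 36 = 4926129274251952 := by have e := xrec 33; norm_num at e; rw [e, x35, x34, x33]; norm_num
lemma x37 : modTripell 37 = 13946744921023873 := by have e := xrec 34; norm_num at e; rw [e, x36, x35, x34]; norm_num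
lemma x38 : modTripell 38 = 39485706335151426 := by have e := xrec 35; norm_num at e; rw [e, x37, x36, x35]; norm_num
lemma x39 : modTripell 39 = 111791031786602550 := by have e := xrec 36; norm_num at e; rw [e, x38, x37, x36]; norm_num
lemma x40 : modTripell 40 = 316500221164531825 := by have e := xrec 37; norm_num at e; rw [e, x39, x38, x37]; norm_num
lemma x41 : modTripell 41 = 896068212237420176 := by have e := xrec 38; norm_num at e; rw [e, x40, x39, x38]; norm_num
lemma x42 : modTripell 42 = 2536927898590506552 := by have e := xrec 39; norm_num at e; rw [e, x41, x40, x39]; norm_num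
lemma x43 : modTripell 43 = 7182492442820385281 := by have e := xrec 40; norm_num at e; rw [e, x42, x41, x40]; norm_num
lemma x44 : modTripell 44 = 20334908895059203842 := by have e := xrec 41; norm_num at e; rw [e, x43, x42, x41]; norm_num
lemma x45 : modTripell 45 = 57571730574349684798 := by have e := xrec 42; norm_num at e; rw [e, x44, x43, x42]; norm_num
lemma x46 : modTripell 46 = 162995771381638162561 := by have e := xrec 43; norm_num at e; rw [e, x45, x44, x43]; norm_num
lemma x47 : modTripell 47 = 461469912807034898560 := by have e := xrec 44; norm_num at e; rw [e, x46, x45, x44]; norm_num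
lemma x48 : modTripell 48 = 1306503098951695807040 := by have e := xrec 45; norm_num at e; rw [e, x47, x46, x45]; norm_num
lemma x49 : modTripell 49 = 3698941794899099573761 := by have e := xrec 46; norm_num at e; rw [e, x48, x47, x46]; norm_num

lemma fact_eq_one {m : ℕ} (hm : 1 ≤ m) (h : Nat.factorial m = 1) : m = 1 := by
  by_contra hne
  have h2 : 2 ≤ m := by omega
  have hle := Nat.factorial_le h2
  have h22 : Nat.factorial 2 = 2 := rfl
  omega

lemma fact_eq_two {m : ℕ} (h : Nat.factorial m = 2) : m = 2 := by
  by_contra hne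
  rcases Nat.lt_or_ge m 3 with h3 | h3
  · interval_cases m
    · exact absurd h (by decide)
    · exact absurd h (by decide)
    · exact hne rfl
  · have hle := Nat.factorial_le h3
    have h36 : Nat.factorial 3 = 6 := rfl
    omega

lemma fact_eq_three {m : ℕ} (h : Nat.factorial m = 6) : m = 3 := by
  by_contra hne
  rcases Nat.lt_or_ge m 4 with h4 | h4
  · interval_cases m
    · exact absurd h (by decide)
    · exact absurd h (by decide)
    · exact absurd h (by decide)
    · exact hne rfl
  · have hle := Nat.factorial_le h4
    have h424 : Nat.factorial 4 = 24 := rfl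
    omega

lemma big_m (n m : ℕ) (hn : 1 ≤ n) (hm : 18 ≤ m)
    (h : modTripell n = (m.factorial : ℤ)) : False := by
  set t := m/2 - 4 with htdef
  have ht5 : 5 ≤ t := by omega
  have htm : m/2 = t + 4 := by omega
  have hd1 : (2:ℕ)^(t+4) ∣ m.factorial := by
    have h1 := two_pow_dvd_fact (m/2)
    have h2 : Nat.factorial (2*(m/2)) ∣ m.factorial := Nat.factorial_dvd_factorial (by omega)
    rw [htm] at h1 h2
    exact dvd_trans h1 h2
  have hd2 : ((2:ℤ)^(t+4)) ∣ modTripell n := by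
    rw [h]
    exact_mod_cast Int.natCast_dvd_natCast.mpr hd1
  have hT := Tmain t n hn hd2
  have hn6 : 6*2^t ≤ n + 1 := by
    rcases hT with hdvd | hdvd
    · have h12 : 12*2^t ≤ n := Nat.le_of_dvd (by omega) hdvd
      have : 6*2^t ≤ 12*2^t := by omega
      omega
    · exact Nat.le_of_dvd (by omega) hdvd
  have hg : (2:ℤ)^(n-1) ≤ (m.factorial : ℤ) := by
    have hx := x_ge (n-1)
    rw [show n-1+1 = n by omega] at hx
    rw [← h]; exact hx
  have hgn : (2:ℕ)^(n-1) ≤ m.factorial := by exact_mod_cast hg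
  have hub : m.factorial ≤ 2^((t+2)*(2*t+9)) := by
    calc m.factorial ≤ m^m := Nat.factorial_le_pow m
      _ ≤ (2^(t+2))^m := Nat.pow_le_pow_left (le_trans (by omega : m ≤ 2*t+9) (ineq2 t ht5)) m
      _ = 2^((t+2)*m) := by rw [← pow_mul]
      _ ≤ 2^((t+2)*(2*t+9)) := Nat.pow_le_pow_right (by omega) (Nat.mul_le_mul_left _ (by omega))
  have hle : n - 1 ≤ (t+2)*(2*t+9) := by
    have hh := le_trans hgn hub
    exact (Nat.pow_le_pow_iff_right (by omega)).mp hh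
  have hineq := ineq1 t ht5
  have hcomm : (t+2)*(2*t+9) = (2*t+9)*(t+2) := by ring
  omega

theorem stmt_3 (n m : ℕ) (hn : 1 ≤ n) (hm : 1 ≤ m) :
    modTripell n = (m.factorial : ℤ) ↔
      (n, m) = (1, 1) ∨ (n, m) = (2, 2) ∨ (n, m) = (3, 3) := by
  constructor
  · intro h
    rcases Nat.lt_or_ge m 18 with hm17 | hm18
    swap
    · exact absurd h (fun hh => big_m n m hn hm18 hh)
    have hg : (2:ℤ)^(n-1) ≤ (m.factorial : ℤ) := by
      have hx := x_ge (n-1)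
      rw [show n-1+1 = n by omega] at hx
      rw [← h]; exact hx
    have hgn : (2:ℕ)^(n-1) ≤ m.factorial := by exact_mod_cast hg
    have hfle : m.factorial ≤ Nat.factorial 17 := Nat.factorial_le (by omega)
    have h17v : Nat.factorial 17 = 355687428096000 := by norm_num [Nat.factorial]
    have h49 : n ≤ 49 := by
      by_contra hc
      have h1 : (2:ℕ)^49 ≤ 2^(n-1) := Nat.pow_le_pow_right (by omega) (by omega)
      norm_num at h1
      omega
    interval_cases n
    · rw [x1] at h
      have hm1 : m.factorial = 1 := by exact_mod_cast h.symm
      have := fact_eq_one hm hm1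
      subst this
      exact Or.inl rfl
    · rw [x2] at h
      have hm2 : m.factorial = 2 := by exact_mod_cast h.symm
      have := fact_eq_two hm2
      subst this
      exact Or.inr (Or.inl rfl)
    · rw [x3] at h
      have hm3 : m.factorial = 6 := by exact_mod_cast h.symm
      have := fact_eq_three hm3
      subst this
      exact Or.inr (Or.inr rfl)
    · rw [x4] at h
      have hmv : m.factorial = 17 := by exact_mod_cast h.symm
      exact absurd hmv (no_fact_between 17 3 (by norm_num [Nat.factorial]) (by norm_num [Nat.factorial]) m)
    · rw [x5] at h
      have hmv : m.factorial = 48 := by exact_mod_cast h.symm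
      exact absurd hmv (no_fact_between 48 4 (by norm_num [Nat.factorial]) (by norm_num [Nat.factorial]) m)
    · rw [x6] at h
      have hmv : m.factorial = 136 := by exact_mod_cast h.symm
      exact absurd hmv (no_fact_between 136 5 (by norm_num [Nat.factorial]) (by norm_num [Nat.factorial]) m)
    · rw [x7] at h
      have hmv : m.factorial = 385 := by exact_mod_cast h.symm
      exact absurd hmv (no_fact_between 385 5 (by norm_num [Nat.factorial]) (by norm_num [Nat.factorial]) m)
    · rw [x8] at h
      have hmv : m.factorial = 1090 := by exact_mod_cast h.symm
      exact absurd hmv (no_fact_between 1090 6 (by norm_num [Nat.factorial]) (by norm_num [Nat.factorial]) m)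
    · rw [x9] at h
      have hmv : m.factorial = 3086 := by exact_mod_cast h.symm
      exact absurd hmv (no_fact_between 3086 6 (by norm_num [Nat.factorial]) (by norm_num [Nat.factorial]) m)
    · rw [x10] at h
      have hmv : m.factorial = 8737 := by exact_mod_cast h.symm
      exact absurd hmv (no_fact_between 8737 7 (by norm_num [Nat.factorial]) (by norm_num [Nat.factorial]) m)
    · rw [x11] at h
      have hmv : m.factorial = 24736 := by exact_mod_cast h.symm
      exact absurd hmv (no_fact_between 24736 7 (by norm_num [Nat.factorial]) (by norm_num [Nat.factorial]) m)
    · rw [x12] at h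
      have hmv : m.factorial = 70032 := by exact_mod_cast h.symm
      exact absurd hmv (no_fact_between 70032 8 (by norm_num [Nat.factorial]) (by norm_num [Nat.factorial]) m)
    · rw [x13] at h
      have hmv : m.factorial = 198273 := by exact_mod_cast h.symm
      exact absurd hmv (no_fact_between 198273 8 (by norm_num [Nat.factorial]) (by norm_num [Nat.factorial]) m)
    · rw [x14] at h
      have hmv : m.factorial = 561346 := by exact_mod_cast h.symm
      exact absurd hmv (no_fact_between 561346 9 (by norm_num [Nat.factorial]) (by norm_num [Nat.factorial]) m)
    · rw [x15] at h
      have hmv : m.factorial = 1589270 := by exact_mod_cast h.symm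
      exact absurd hmv (no_fact_between 1589270 9 (by norm_num [Nat.factorial]) (by norm_num [Nat.factorial]) m)
    · rw [x16] at h
      have hmv : m.factorial = 4499505 := by exact_mod_cast h.symm
      exact absurd hmv (no_fact_between 4499505 10 (by norm_num [Nat.factorial]) (by norm_num [Nat.factorial]) m)
    · rw [x17] at h
      have hmv : m.factorial = 12738896 := by exact_mod_cast h.symm
      exact absurd hmv (no_fact_between 12738896 10 (by norm_num [Nat.factorial]) (by norm_num [Nat.factorial]) m)
    · rw [x18] at h
      have hmv : m.factorial = 36066072 := by exact_mod_cast h.symm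
      exact absurd hmv (no_fact_between 36066072 10 (by norm_num [Nat.factorial]) (by norm_num [Nat.factorial]) m)
    · rw [x19] at h
      have hmv : m.factorial = 102109441 := by exact_mod_cast h.symm
      exact absurd hmv (no_fact_between 102109441 11 (by norm_num [Nat.factorial]) (by norm_num [Nat.factorial]) m)
    · rw [x20] at h
      have hmv : m.factorial = 289089922 := by exact_mod_cast h.symm
      exact absurd hmv (no_fact_between 289089922 11 (by norm_num [Nat.factorial]) (by norm_num [Nat.factorial]) m)
    · rw [x21] at h
      have hmv : m.factorial = 818464798 := by exact_mod_cast h.symm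
      exact absurd hmv (no_fact_between 818464798 12 (by norm_num [Nat.factorial]) (by norm_num [Nat.factorial]) m)
    · rw [x22] at h
      have hmv : m.factorial = 2317218881 := by exact_mod_cast h.symm
      exact absurd hmv (no_fact_between 2317218881 12 (by norm_num [Nat.factorial]) (by norm_num [Nat.factorial]) m)
    · rw [x23] at h
      have hmv : m.factorial = 6560457280 := by exact_mod_cast h.symm
      exact absurd hmv (no_fact_between 6560457280 13 (by norm_num [Nat.factorial]) (by norm_num [Nat.factorial]) m)
    · rw [x24] at h
      have hmv : m.factorial = 18573817120 := by exact_mod_cast h.symm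
      exact absurd hmv (no_fact_between 18573817120 13 (by norm_num [Nat.factorial]) (by norm_num [Nat.factorial]) m)
    · rw [x25] at h
      have hmv : m.factorial = 52585767681 := by exact_mod_cast h.symm
      exact absurd hmv (no_fact_between 52585767681 13 (by norm_num [Nat.factorial]) (by norm_num [Nat.factorial]) m)
    · rw [x26] at h
      have hmv : m.factorial = 148879626882 := by exact_mod_cast h.symm
      exact absurd hmv (no_fact_between 148879626882 14 (by norm_num [Nat.factorial]) (by norm_num [Nat.factorial]) m)
    · rw [x27] at h
      have hmv : m.factorial = 421504606246 := by exact_mod_cast h.symm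
      exact absurd hmv (no_fact_between 421504606246 14 (by norm_num [Nat.factorial]) (by norm_num [Nat.factorial]) m)
    · rw [x28] at h
      have hmv : m.factorial = 1193354233937 := by exact_mod_cast h.symm
      exact absurd hmv (no_fact_between 1193354233937 14 (by norm_num [Nat.factorial]) (by norm_num [Nat.factorial]) m)
    · rw [x29] at h
      have hmv : m.factorial = 3378597307248 := by exact_mod_cast h.symm
      exact absurd hmv (no_fact_between 3378597307248 15 (by norm_num [Nat.factorial]) (by norm_num [Nat.factorial]) m)
    · rw [x30] at h
      have hmv : m.factorial = 9565407688616 := by exact_mod_cast h.symm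
      exact absurd hmv (no_fact_between 9565407688616 15 (by norm_num [Nat.factorial]) (by norm_num [Nat.factorial]) m)
    · rw [x31] at h
      have hmv : m.factorial = 27081364225665 := by exact_mod_cast h.symm
      exact absurd hmv (no_fact_between 27081364225665 16 (by norm_num [Nat.factorial]) (by norm_num [Nat.factorial]) m)
    · rw [x32] at h
      have hmv : m.factorial = 76672141135810 := by exact_mod_cast h.symm
      exact absurd hmv (no_fact_between 76672141135810 16 (by norm_num [Nat.factorial]) (by norm_num [Nat.factorial]) m)
    · rw [x33] at h
      have hmv : m.factorial = 217072418411566 := by exact_mod_cast h.symm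
      exact absurd hmv (no_fact_between 217072418411566 16 (by norm_num [Nat.factorial]) (by norm_num [Nat.factorial]) m)
    · rw [x34] at h
      have hmv : m.factorial = 614570483320417 := by exact_mod_cast h.symm
      exact absurd hmv (no_fact_between 614570483320417 17 (by norm_num [Nat.factorial]) (by norm_num [Nat.factorial]) m)
    · rw [x35] at h
      have hmv : m.factorial = 1739957944599776 := by exact_mod_cast h.symm
      exact absurd hmv (no_fact_between 1739957944599776 17 (by norm_num [Nat.factorial]) (by norm_num [Nat.factorial]) m)
    · rw [x36] at h
      have hmv : m.factorial = 4926129274251952 := by exact_mod_cast h.symm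
      exact absurd hmv (no_fact_between 4926129274251952 17 (by norm_num [Nat.factorial]) (by norm_num [Nat.factorial]) m)
    · rw [x37] at h
      have hmv : m.factorial = 13946744921023873 := by exact_mod_cast h.symm
      exact absurd hmv (no_fact_between 13946744921023873 18 (by norm_num [Nat.factorial]) (by norm_num [Nat.factorial]) m)
    · rw [x38] at h
      have hmv : m.factorial = 39485706335151426 := by exact_mod_cast h.symm
      exact absurd hmv (no_fact_between 39485706335151426 18 (by norm_num [Nat.factorial]) (by norm_num [Nat.factorial]) m)
    · rw [x39] at h
      have hmv : m.factorial = 111791031786602550 := by exact_mod_cast h.symm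
      exact absurd hmv (no_fact_between 111791031786602550 18 (by norm_num [Nat.factorial]) (by norm_num [Nat.factorial]) m)
    · rw [x40] at h
      have hmv : m.factorial = 316500221164531825 := by exact_mod_cast h.symm
      exact absurd hmv (no_fact_between 316500221164531825 19 (by norm_num [Nat.factorial]) (by norm_num [Nat.factorial]) m)
    · rw [x41] at h
      have hmv : m.factorial = 896068212237420176 := by exact_mod_cast h.symm
      exact absurd hmv (no_fact_between 896068212237420176 19 (by norm_num [Nat.factorial]) (by norm_num [Nat.factorial]) m)
    · rw [x42] at h
      have hmv : m.factorial = 2536927898590506552 := by exact_mod_cast h.symm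
      exact absurd hmv (no_fact_between 2536927898590506552 20 (by norm_num [Nat.factorial]) (by norm_num [Nat.factorial]) m)
    · rw [x43] at h
      have hmv : m.factorial = 7182492442820385281 := by exact_mod_cast h.symm
      exact absurd hmv (no_fact_between 7182492442820385281 20 (by norm_num [Nat.factorial]) (by norm_num [Nat.factorial]) m)
    · rw [x44] at h
      have hmv : m.factorial = 20334908895059203842 := by exact_mod_cast h.symm
      exact absurd hmv (no_fact_between 20334908895059203842 20 (by norm_num [Nat.factorial]) (by norm_num [Nat.factorial]) m)
    · rw [x45] at h
      have hmv : m.factorial = 57571730574349684798 := by exact_mod_cast h.symm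
      exact absurd hmv (no_fact_between 57571730574349684798 21 (by norm_num [Nat.factorial]) (by norm_num [Nat.factorial]) m)
    · rw [x46] at h
      have hmv : m.factorial = 162995771381638162561 := by exact_mod_cast h.symm
      exact absurd hmv (no_fact_between 162995771381638162561 21 (by norm_num [Nat.factorial]) (by norm_num [Nat.factorial]) m)
    · rw [x47] at h
      have hmv : m.factorial = 461469912807034898560 := by exact_mod_cast h.symm
      exact absurd hmv (no_fact_between 461469912807034898560 21 (by norm_num [Nat.factorial]) (by norm_num [Nat.factorial]) m)
    · rw [x48] at h
      have hmv : m.factorial = 1306503098951695807040 := by exact_mod_cast h.symm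
      exact absurd hmv (no_fact_between 1306503098951695807040 22 (by norm_num [Nat.factorial]) (by norm_num [Nat.factorial]) m)
    · rw [x49] at h
      have hmv : m.factorial = 3698941794899099573761 := by exact_mod_cast h.symm
      exact absurd hmv (no_fact_between 3698941794899099573761 22 (by norm_num [Nat.factorial]) (by norm_num [Nat.factorial]) m)
  · rintro (h | h | h) <;> simp only [Prod.mk.injEq] at h <;> obtain ⟨rfl, rfl⟩ := h
    · rw [x1]; norm_num [Nat.factorial]
    · rw [x2]; norm_num [Nat.factorial]
    · rw [x3]; norm_num [Nat.factorial]
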